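/- Let f ∈ ℤ[t,t⁻¹] be a Laurent polynomial with f(1) = 1 or f(1) = −1, and let H = ℤ[t,t⁻¹]/(f) be the cyclic module it presents. Then multiplication by (t−1) is a bijection on H. Consequently H is a finitely generated torsion ℤ[t,t⁻¹]-module on which (t−1) acts invertibly, with order f. -/

import Mathlib

open LaurentPolynomial

lemma dvd_T_sub_one (n : ℤ) : (T 1 - 1 : LaurentPolynomial ℤ) ∣ (T n - 1) := by
  induction n using Int.induction_on with
  | zero => simp
  | succ n ih =>
    have : (T ((n:ℤ) + 1) - 1 : LaurentPolynomial ℤ) = T n * (T 1 - 1) + (T n - 1) := by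
      rw [T_add]; ring
    rw [this]
    exact dvd_add (Dvd.intro_left _ rfl) ih
  | pred n ih =>
    have : (T (-(n:ℤ) - 1) - 1 : LaurentPolynomial ℤ)
        = -(T (-(n:ℤ) - 1)) * (T 1 - 1) + (T (-n) - 1) := by
      have : (T (-(n:ℤ)) : LaurentPolynomial ℤ) = T (-(n:ℤ) - 1) * T 1 := by
        rw [← T_add]; ring_nf
      rw [this]; ring
    rw [this]
    exact dvd_add (Dvd.intro_left _ rfl) ih

lemma eps_T (ε : LaurentPolynomial ℤ →+* ℤ) (hε : ε (T 1) = 1) (n : ℤ) : ε (T n) = 1 := by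
  have := dvd_T_sub_one n
  obtain ⟨g, hg⟩ := this
  have := congrArg ε hg
  simp [hε] at this
  omega

lemma dvd_sub_eps (ε : LaurentPolynomial ℤ →+* ℤ) (hε : ε (T 1) = 1)
    (p : LaurentPolynomial ℤ) :
    (T 1 - 1 : LaurentPolynomial ℤ) ∣ (p - C (ε p)) := by
  induction p using LaurentPolynomial.induction_on' with
  | add p q hp hq =>
    have : (p + q - C (ε (p + q)) : LaurentPolynomial ℤ)
        = (p - C (ε p)) + (q - C (ε q)) := by
      rw [map_add, map_add]; ring
    rw [this]; exact dvd_add hp hq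
  | C_mul_T n a =>
    have hca : ε (C a) = a := by
      have : (ε.comp (LaurentPolynomial.C : ℤ →+* LaurentPolynomial ℤ)) = RingHom.id ℤ :=
        Subsingleton.elim _ _
      exact congrArg (fun g => g a) this
    have : (C a * T n - C (ε (C a * T n)) : LaurentPolynomial ℤ)
        = C a * (T n - 1) := by
      rw [map_mul, hca, eps_T ε hε]; ring
    rw [this]
    exact Dvd.dvd.mul_left (dvd_T_sub_one n) _

theorem stmt_11 (f : LaurentPolynomial ℤ)
    (ε : LaurentPolynomial ℤ →+* ℤ) (hε : ε (T 1) = 1)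
    (hf : ε f = 1 ∨ ε f = -1) :
    Function.Bijective
      (fun x : LaurentPolynomial ℤ ⧸ Ideal.span {f} =>
        (T 1 - 1 : LaurentPolynomial ℤ) • x) ∧
    Module.Finite (LaurentPolynomial ℤ) (LaurentPolynomial ℤ ⧸ Ideal.span {f}) ∧
    (∀ x : LaurentPolynomial ℤ ⧸ Ideal.span {f},
      ∃ r : LaurentPolynomial ℤ, r ≠ 0 ∧ r • x = 0) ∧
    Module.annihilator (LaurentPolynomial ℤ) (LaurentPolynomial ℤ ⧸ Ideal.span {f}) =
      Ideal.span {f} := by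
  obtain ⟨g, hg⟩ := dvd_sub_eps ε hε f
  set c : ℤ := ε f with hc
  set I : Ideal (LaurentPolynomial ℤ) := Ideal.span {f} with hI
  have hc2 : (C c : LaurentPolynomial ℤ) * C c = 1 := by
    rw [← map_mul, ← map_one LaurentPolynomial.C]
    congr 1
    rcases hf with h | h <;> rw [h] <;> norm_num
  have hfI : (Ideal.Quotient.mk I) f = 0 := by
    rw [Ideal.Quotient.eq_zero_iff_mem]
    exact Ideal.subset_span rfl
  have key : (Ideal.Quotient.mk I) ((T 1 - 1) * g) = -(Ideal.Quotient.mk I) (C c) := by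
    have h1 : (T 1 - 1 : LaurentPolynomial ℤ) * g = f - C c := hg.symm
    rw [h1, map_sub, hfI, zero_sub]
  have hsmul : ∀ (r : LaurentPolynomial ℤ) (x : LaurentPolynomial ℤ ⧸ I),
      r • x = (Ideal.Quotient.mk I r) * x := fun r x => rfl
  have hbij : Function.Bijective
      (fun x : LaurentPolynomial ℤ ⧸ I => (T 1 - 1 : LaurentPolynomial ℤ) • x) := by
    have hu : IsUnit ((Ideal.Quotient.mk I) (T 1 - 1)) := by
      refine IsUnit.of_mul_eq_one ((Ideal.Quotient.mk I) (-(C c) * g)) ?_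
      rw [← map_mul]
      have h2 : (T 1 - 1 : LaurentPolynomial ℤ) * (-(C c) * g)
          = (-(C c)) * ((T 1 - 1) * g) := by ring
      have h3 : -(Ideal.Quotient.mk I) (C c) * -(Ideal.Quotient.mk I) (C c)
          = (Ideal.Quotient.mk I) (C c * C c) := by rw [map_mul]; ring
      rw [h2, map_mul, key, map_neg, h3, hc2, map_one]
    constructor
    · intro x y hxy
      simp only [hsmul] at hxy
      exact (IsUnit.mul_right_injective hu) hxy
    · intro y
      obtain ⟨u, hu'⟩ := hu
      refine ⟨(↑u⁻¹ : LaurentPolynomial ℤ ⧸ I) * y, ?_⟩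
      show (T 1 - 1 : LaurentPolynomial ℤ) • ((↑u⁻¹ : LaurentPolynomial ℤ ⧸ I) * y) = y
      rw [hsmul, ← hu', ← mul_assoc, Units.mul_inv, one_mul]
  have hfne : f ≠ 0 := by
    intro h
    have h0 : ε f = 0 := by rw [h, map_zero]
    rw [← hc] at h0
    rcases hf with hh | hh <;> omega
  have hann : ∀ x : LaurentPolynomial ℤ ⧸ I, f • x = 0 := by
    intro x
    obtain ⟨p, rfl⟩ := Ideal.Quotient.mk_surjective x
    rw [hsmul, hfI, zero_mul]
  refine ⟨hbij, inferInstance, fun x => ⟨f, hfne, hann x⟩, ?_⟩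
  apply le_antisymm
  · intro r hr
    have h3 := Module.mem_annihilator.mp hr (Ideal.Quotient.mk I 1)
    rw [hsmul, map_one, mul_one] at h3
    exact Ideal.Quotient.eq_zero_iff_mem.mp h3
  · intro r hr
    rw [Module.mem_annihilator]
    intro x
    obtain ⟨p, rfl⟩ := Ideal.Quotient.mk_surjective x
    rw [hsmul, Ideal.Quotient.eq_zero_iff_mem.mpr hr, zero_mul]
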